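/- The sequence of real numbers (d_{m-1}/d_m)_{m ≥ 0} is strictly increasing. -/
import Mathlib


/-- The sequence of real numbers `(d_{m-1}/d_m)_{m ≥ 0}` is strictly increasing. -/
theorem stmt_5 (n : ℤ) (hn : 1 ≤ n) (d : ℤ → ℤ)
    (hneg : d (-1) = 0) (h0 : d 0 = 1) (h1 : d 1 = n + 1)
    (hrec : ∀ m : ℤ, 2 ≤ m → d m = (n + 1) * d (m - 1) - d (m - 2)) :
    StrictMono (fun m : ℕ => (d ((m : ℤ) - 1) : ℝ) / (d (m : ℤ) : ℝ)) := by
  -- positivity and monotonicity of d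
  have key : ∀ m : ℕ, 0 < d (m : ℤ) ∧ d ((m : ℤ) - 1) < d (m : ℤ) := by
    intro m
    induction m with
    | zero =>
      norm_num [h0, hneg]
    | succ k ih =>
      rcases Nat.eq_zero_or_pos k with hk | hk
      · subst hk
        constructor
        · rw [show ((0 + 1 : ℕ) : ℤ) = 1 by norm_num, h1]; omega
        · rw [show ((0 + 1 : ℕ) : ℤ) - 1 = 0 by norm_num,
            show ((0 + 1 : ℕ) : ℤ) = 1 by norm_num, h0, h1]; omega
      · have h2 := hrec ((k : ℤ) + 1) (by omega)
        rw [show ((k : ℤ) + 1) - 1 = (k : ℤ) by ring,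
          show ((k : ℤ) + 1) - 2 = (k : ℤ) - 1 by ring] at h2
        rw [show ((k + 1 : ℕ) : ℤ) = (k : ℤ) + 1 by push_cast; ring,
          show ((k : ℤ) + 1) - 1 = (k : ℤ) by ring]
        obtain ⟨hp, hm⟩ := ih
        constructor <;> nlinarith
  -- determinant identity
  have det : ∀ m : ℕ, d ((m : ℤ) + 1) * d ((m : ℤ) - 1) - d (m : ℤ) * d (m : ℤ) = -1 := by
    intro m
    induction m with
    | zero =>
      norm_num [h0, h1, hneg]
    | succ k ih =>
      have h2 := hrec ((k : ℤ) + 2) (by omega)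
      rw [show ((k : ℤ) + 2) - 1 = (k : ℤ) + 1 by ring,
        show ((k : ℤ) + 2) - 2 = (k : ℤ) by ring] at h2
      rcases Nat.eq_zero_or_pos k with hk | hk
      · subst hk
        norm_num at h2 ⊢
        rw [h2, h0, h1]; ring
      · have h3 := hrec ((k : ℤ) + 1) (by omega)
        rw [show ((k : ℤ) + 1) - 1 = (k : ℤ) by ring,
          show ((k : ℤ) + 1) - 2 = (k : ℤ) - 1 by ring] at h3
        rw [show ((k + 1 : ℕ) : ℤ) + 1 = (k : ℤ) + 2 by push_cast; ring,
          show ((k + 1 : ℕ) : ℤ) - 1 = (k : ℤ) + 1 - 1 by push_cast; ring,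
          show ((k : ℤ) + 1) - 1 = (k : ℤ) by ring,
          show ((k + 1 : ℕ) : ℤ) = (k : ℤ) + 1 by push_cast; ring]
        linear_combination ih + d (k : ℤ) * h2 - d ((k : ℤ) + 1) * h3
  apply strictMono_nat_of_lt_succ
  intro m
  have hm := (key m).1
  have hm1 := (key (m + 1)).1
  rw [show ((m + 1 : ℕ) : ℤ) = (m : ℤ) + 1 by push_cast; ring] at hm1 ⊢
  have hmR : (0 : ℝ) < (d (m : ℤ) : ℝ) := by exact_mod_cast hm
  have hm1R : (0 : ℝ) < (d ((m : ℤ) + 1) : ℝ) := by exact_mod_cast hm1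
  show (d ((m : ℤ) - 1) : ℝ) / (d (m : ℤ) : ℝ) < (d ((m : ℤ) + 1 - 1) : ℝ) / (d ((m : ℤ) + 1) : ℝ)
  rw [show (m : ℤ) + 1 - 1 = (m : ℤ) by ring, div_lt_div_iff₀ hmR hm1R]
  have := det m
  have : d ((m : ℤ) - 1) * d ((m : ℤ) + 1) < d (m : ℤ) * d (m : ℤ) := by nlinarith
  exact_mod_cast this
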